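/- Let V be a Hilbert space, Q = ℝⁿ, a : V × V → ℝ a bounded symmetric bilinear form, b : V × Q → ℝ a bounded bilinear form with associated operator B : V → Q, and f ∈ V'. If a is coercive on ker B and B is surjective, then the saddle-point problem — find (u, λ) ∈ V × Q with a(u,v) + b(v,λ) = f(v) for all v ∈ V and b(u,Γ) = 0 for all Γ ∈ Q — has a unique solution. -/

import Mathlib

open scoped InnerProductSpace

set_option maxHeartbeats 1000000

/-- Well-posedness of the abstract saddle-point problem: if the bounded
symmetric bilinear form a is coercive on ker B and B : V → ℝⁿ is surjective,
then there is a unique (u, λ) with a(u,v) + ⟨Bv,λ⟩ = f(v) for all v and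
⟨Bu,Γ⟩ = 0 for all Γ. -/
theorem saddle_point_wellposed {V : Type*} [NormedAddCommGroup V]
    [InnerProductSpace ℝ V] [CompleteSpace V] (n : ℕ)
    (A : V →L[ℝ] V →L[ℝ] ℝ)
    (B : V →L[ℝ] EuclideanSpace ℝ (Fin n))
    (f : V →L[ℝ] ℝ)
    (hsymm : ∀ u v : V, A u v = A v u)
    (α : ℝ) (hα : 0 < α)
    (hcoer : ∀ v : V, B v = 0 → α * ‖v‖ ^ 2 ≤ A v v)
    (hsurj : Function.Surjective B) :
    ∃! p : V × EuclideanSpace ℝ (Fin n),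
      (∀ v : V, A p.1 v + ⟪B v, p.2⟫_ℝ = f v) ∧
      (∀ Γ : EuclideanSpace ℝ (Fin n), ⟪B p.1, Γ⟫_ℝ = 0) := by
  classical
  set K : Submodule ℝ V := LinearMap.ker (B : V →ₗ[ℝ] EuclideanSpace ℝ (Fin n)) with hK
  have hKclosed : IsClosed (K : Set V) := ContinuousLinearMap.isClosed_ker B
  haveI : CompleteSpace K := hKclosed.completeSpace_coe
  -- restricted bilinear form on K
  set AK : K →L[ℝ] K →L[ℝ] ℝ :=
    ((A.comp K.subtypeL).flip.comp K.subtypeL).flip with hAK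
  have hAKapp : ∀ u v : K, AK u v = A (u : V) (v : V) := fun u v => rfl
  have hAKcoer : IsCoercive AK := by
    refine ⟨α, hα, fun u => ?_⟩
    have hu : B (u : V) = 0 := u.2
    have := hcoer (u : V) hu
    rw [hAKapp]
    calc α * ‖u‖ * ‖u‖ = α * ‖(u : V)‖ ^ 2 := by ring_nf; rw [Submodule.norm_coe]
      _ ≤ A (u : V) (u : V) := this
  -- Lax–Milgram on K
  set fK : K →L[ℝ] ℝ := f.comp K.subtypeL with hfK
  set z : K := (InnerProductSpace.toDual ℝ K).symm fK with hz
  set u₀ : K := hAKcoer.continuousLinearEquivOfBilin.symm z with hu₀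
  have hLM : ∀ v : K, AK u₀ v = fK v := by
    intro v
    have h1 : ⟪hAKcoer.continuousLinearEquivOfBilin u₀, v⟫_ℝ = AK u₀ v :=
      hAKcoer.continuousLinearEquivOfBilin_apply u₀ v
    have h2 : hAKcoer.continuousLinearEquivOfBilin u₀ = z := by
      simp [hu₀]
    rw [h2] at h1
    rw [← h1, hz, InnerProductSpace.toDual_symm_apply]
  have hu₀mem : B (u₀ : V) = 0 := u₀.2
  -- the residual functional vanishes on ker B
  set g : V →L[ℝ] ℝ := f - A (u₀ : V) with hg
  have hgker : ∀ w : V, B w = 0 → g w = 0 := by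
    intro w hw
    have := hLM ⟨w, hw⟩
    simp only [hAKapp, hfK, ContinuousLinearMap.comp_apply, Submodule.subtypeL_apply] at this
    simp [hg, ← this]
  -- right inverse of B
  obtain ⟨S, hS⟩ := (B : V →ₗ[ℝ] EuclideanSpace ℝ (Fin n)).exists_rightInverse_of_surjective
    (LinearMap.range_eq_top.2 hsurj)
  have hSapp : ∀ y, B (S y) = y := fun y => congrFun (congrArg DFunLike.coe hS) y
  -- define λ
  set ψ : EuclideanSpace ℝ (Fin n) →ₗ[ℝ] ℝ := (g : V →ₗ[ℝ] ℝ).comp S with hψ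
  set lam : EuclideanSpace ℝ (Fin n) :=
    (InnerProductSpace.toDual ℝ _).symm (LinearMap.toContinuousLinearMap ψ) with hlam
  have hlamapp : ∀ y, ⟪lam, y⟫_ℝ = ψ y := by
    intro y
    rw [hlam, InnerProductSpace.toDual_symm_apply]
    simp
  have hkey : ∀ v : V, ⟪B v, lam⟫_ℝ = g v := by
    intro v
    have hmem : B (v - S (B v)) = 0 := by simp [hSapp]
    have h0 := hgker _ hmem
    have : g v = g (S (B v)) := by
      have := h0
      simp only [map_sub] at this
      linarith
    rw [real_inner_comm, hlamapp]
    simp [hψ, ← this]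
  refine ⟨((u₀ : V), lam), ⟨?_, ?_⟩, ?_⟩
  · intro v
    have := hkey v
    simp only [hg, ContinuousLinearMap.sub_apply] at this
    have hsy : A (u₀ : V) v = A v (u₀ : V) := hsymm _ _
    linarith
  · intro Γ; rw [hu₀mem]; simp
  · rintro ⟨u, l⟩ ⟨h1, h2⟩
    -- B u = 0
    have hBu : B u = 0 := by
      have := h2 (B u)
      rwa [inner_self_eq_zero] at this
    -- u - u₀ ∈ ker B, and A (u - u₀) v + ⟪B v, l - lam⟫ = 0
    have h1' : ∀ v, A (u₀ : V) v + ⟪B v, lam⟫_ℝ = f v := by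
      intro v
      have := hkey v
      simp only [hg, ContinuousLinearMap.sub_apply] at this
      linarith
    have hdiff : ∀ v : V, A (u - (u₀ : V)) v + ⟪B v, l - lam⟫_ℝ = 0 := by
      intro v
      have ha := h1 v
      have hb := h1' v
      simp only [map_sub, ContinuousLinearMap.sub_apply, inner_sub_right]
      linarith
    have hw0 : u - (u₀ : V) = 0 := by
      have hBw : B (u - (u₀ : V)) = 0 := by simp [hBu, hu₀mem]
      have := hdiff (u - (u₀ : V))
      rw [hBw] at this
      simp only [inner_zero_left, add_zero] at this
      have hc := hcoer _ hBw
      rw [this] at hc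
      have hn : ‖u - (u₀ : V)‖ ^ 2 ≤ 0 := by nlinarith
      have := sq_nonneg ‖u - (u₀ : V)‖
      have : ‖u - (u₀ : V)‖ ^ 2 = 0 := le_antisymm hn this
      simpa [pow_eq_zero_iff] using this
    have hu : u = (u₀ : V) := by rwa [sub_eq_zero] at hw0
    have hl : l = lam := by
      have hinner : ∀ y, ⟪y, l - lam⟫_ℝ = 0 := by
        intro y
        obtain ⟨v, rfl⟩ := hsurj y
        have := hdiff v
        rw [hw0] at this
        simpa using this
      have := hinner (l - lam)
      rw [inner_self_eq_zero] at this
      rwa [sub_eq_zero] at this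
    simp [hu, hl]
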